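/- For all nonnegative integers k and all real x, sum over j from 0 to k of (-1)^j * C(k,j) * C(2k-j, k) * (1-x)^j = sum over j from 0 to k of C(k,j)^2 * x^j. -/

import Mathlib

open Finset

lemma key_nat (k j : ℕ) (hj : j ≤ k) :
    ∑ i ∈ Finset.range (k + 1), k.choose i * k.choose i * i.choose j
      = k.choose j * (2 * k - j).choose k := by
  have h1 : ∑ i ∈ Finset.range (k + 1), k.choose i * k.choose i * i.choose j
      = ∑ i ∈ Finset.Ico j (k + 1), k.choose i * k.choose i * i.choose j := by
    rw [Finset.range_eq_Ico, ← Finset.sum_Ico_consecutive _ (Nat.zero_le j) (by omega)]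
    have : ∑ i ∈ Finset.Ico 0 j, k.choose i * k.choose i * i.choose j = 0 := by
      apply Finset.sum_eq_zero
      intro i hi
      simp only [Finset.mem_Ico] at hi
      rw [Nat.choose_eq_zero_of_lt hi.2, Nat.mul_zero]
    rw [this, Nat.zero_add]
  rw [h1, Finset.sum_Ico_eq_sum_range]
  have h2 : ∀ m ∈ Finset.range (k + 1 - j),
      k.choose (j + m) * k.choose (j + m) * (j + m).choose j
        = k.choose j * (k.choose (j + m) * (k - j).choose m) := by
    intro m hm
    simp only [Finset.mem_range] at hm
    have hjm : j + m ≤ k := by omega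
    have h := Nat.choose_mul (n := k) (Nat.le_add_right j m)
    rw [mul_assoc, mul_comm (k.choose (j + m)) ((j + m).choose j), ← mul_assoc, h,
      Nat.add_sub_cancel_left]
    ring
  rw [Finset.sum_congr rfl h2, ← Finset.mul_sum]
  congr 1
  have h3 : ∀ m ∈ Finset.range (k + 1 - j),
      k.choose (j + m) * (k - j).choose m = (k - j).choose m * k.choose (k - j - m) := by
    intro m hm
    simp only [Finset.mem_range] at hm
    have hh : k - j - m = k - (j + m) := by omega
    rw [hh, Nat.choose_symm (by omega), mul_comm]
  rw [Finset.sum_congr rfl h3]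
  have h4 : k + 1 - j = (k - j) + 1 := by omega
  rw [h4]
  have hv := Nat.add_choose_eq (k - j) k (k - j)
  rw [Finset.Nat.sum_antidiagonal_eq_sum_range_succ_mk] at hv
  have h5 : (k - j + k) = 2 * k - j := by omega
  rw [h5] at hv
  rw [← hv, show k - j = 2 * k - j - k by omega, Nat.choose_symm (by omega)]

/-- `∑_{j=0}^{k} (-1)^j C(k,j) C(2k-j,k) (1-x)^j = ∑_{j=0}^{k} C(k,j)^2 x^j`. -/
theorem alternating_choose_identity (k : ℕ) (x : ℝ) :
    ∑ j ∈ Finset.range (k + 1),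
        (-1 : ℝ) ^ j * (k.choose j : ℝ) * ((2 * k - j).choose k : ℝ) * (1 - x) ^ j =
      ∑ j ∈ Finset.range (k + 1), (k.choose j : ℝ) ^ 2 * x ^ j := by
  set y : ℝ := 1 - x with hy
  have hx : x = 1 - y := by rw [hy]; ring
  rw [hx]
  have expand : ∀ i ∈ Finset.range (k + 1), ((k.choose i : ℝ) ^ 2) * (1 - y) ^ i
      = ∑ j ∈ Finset.range (k + 1),
          (k.choose i : ℝ) ^ 2 * ((i.choose j : ℝ) * (-y) ^ j) := by
    intro i hi
    simp only [Finset.mem_range] at hi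
    have hb : (1 - y) ^ i = ∑ j ∈ Finset.range (i + 1), (-y) ^ j * (1:ℝ) ^ (i - j) * i.choose j := by
      rw [← add_pow]; ring_nf
    have hext : ∑ j ∈ Finset.range (i + 1), (-y) ^ j * (1:ℝ) ^ (i - j) * i.choose j
        = ∑ j ∈ Finset.range (k + 1), (i.choose j : ℝ) * (-y) ^ j := by
      rw [Finset.sum_subset (Finset.range_subset_range.2 (by omega : i + 1 ≤ k + 1))]
      · exact Finset.sum_congr rfl fun j _ => by ring
      · intro j _ hj
        simp only [Finset.mem_range, not_lt] at hj
        rw [Nat.choose_eq_zero_of_lt (by omega)]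
        simp
    rw [hb, hext, Finset.mul_sum]
  rw [Finset.sum_congr rfl expand, Finset.sum_comm]
  refine Finset.sum_congr rfl fun j hj => ?_
  simp only [Finset.mem_range] at hj
  have hkey := key_nat k j (by omega)
  have hcast : (∑ i ∈ Finset.range (k + 1), k.choose i * k.choose i * i.choose j : ℝ)
      = (k.choose j : ℝ) * ((2 * k - j).choose k : ℝ) := by
    exact_mod_cast congrArg (Nat.cast : ℕ → ℝ) hkey
  push_cast at hcast
  symm
  calc ∑ i ∈ Finset.range (k + 1), (k.choose i : ℝ) ^ 2 * ((i.choose j : ℝ) * (-y) ^ j)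
      = (∑ i ∈ Finset.range (k + 1), (k.choose i : ℝ) * (k.choose i : ℝ) * (i.choose j : ℝ))
          * (-y) ^ j := by
        rw [Finset.sum_mul]; exact Finset.sum_congr rfl fun i _ => by ring
    _ = (k.choose j : ℝ) * ((2 * k - j).choose k : ℝ) * (-y) ^ j := by rw [hcast]
    _ = (-1 : ℝ) ^ j * (k.choose j : ℝ) * ((2 * k - j).choose k : ℝ) * y ^ j := by
        rw [neg_pow]; ring
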